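/- Let A₁, A₂, B₁, B₂, C₁ be random variables on a probability space, each taking values in {−1, 1} almost surely, with E[A₁B₁C₁] = −1 and E[A₂B₂C₁] = −1. Then E[A₁A₂B₁B₂] = 1. -/

import Mathlib

open MeasureTheory

lemma aux_neg_one {Ω : Type*} [MeasurableSpace Ω] (μ : Measure Ω) [IsProbabilityMeasure μ]
    (f : Ω → ℝ) (hm : Measurable f) (hpm : ∀ᵐ ω ∂μ, f ω = -1 ∨ f ω = 1)
    (hint : ∫ ω, f ω ∂μ = -1) : ∀ᵐ ω ∂μ, f ω = -1 := by
  have hbd : ∀ᵐ ω ∂μ, ‖f ω‖ ≤ (1:ℝ) := by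
    filter_upwards [hpm] with ω h
    rcases h with h | h <;> simp [h]
  have hInt : Integrable f μ :=
    (integrable_const (1 : ℝ)).mono' hm.aestronglyMeasurable hbd
  have hnn : 0 ≤ᵐ[μ] fun ω => f ω + 1 := by
    filter_upwards [hpm] with ω h
    rcases h with h | h <;> simp [h]
  have hInt' : Integrable (fun ω => f ω + 1) μ := hInt.add (integrable_const 1)
  have hz : ∫ ω, (f ω + 1) ∂μ = 0 := by
    rw [integral_add hInt (integrable_const 1), hint]
    simp
  have := (integral_eq_zero_iff_of_nonneg_ae hnn hInt').mp hz
  filter_upwards [this] with ω h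
  have : f ω + 1 = 0 := h
  linarith

theorem stmt_13 {Ω : Type*} [MeasurableSpace Ω] (μ : Measure Ω) [IsProbabilityMeasure μ]
    (A₁ A₂ B₁ B₂ C₁ : Ω → ℝ)
    (mA₁ : Measurable A₁) (mA₂ : Measurable A₂) (mB₁ : Measurable B₁)
    (mB₂ : Measurable B₂) (mC₁ : Measurable C₁)
    (hA₁ : ∀ᵐ ω ∂μ, A₁ ω = -1 ∨ A₁ ω = 1) (hA₂ : ∀ᵐ ω ∂μ, A₂ ω = -1 ∨ A₂ ω = 1)
    (hB₁ : ∀ᵐ ω ∂μ, B₁ ω = -1 ∨ B₁ ω = 1) (hB₂ : ∀ᵐ ω ∂μ, B₂ ω = -1 ∨ B₂ ω = 1)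
    (hC₁ : ∀ᵐ ω ∂μ, C₁ ω = -1 ∨ C₁ ω = 1)
    (h1 : ∫ ω, A₁ ω * B₁ ω * C₁ ω ∂μ = -1)
    (h2 : ∫ ω, A₂ ω * B₂ ω * C₁ ω ∂μ = -1) :
    ∫ ω, A₁ ω * A₂ ω * B₁ ω * B₂ ω ∂μ = 1 := by
  have hpm1 : ∀ᵐ ω ∂μ, A₁ ω * B₁ ω * C₁ ω = -1 ∨ A₁ ω * B₁ ω * C₁ ω = 1 := by
    filter_upwards [hA₁, hB₁, hC₁] with ω ha hb hc
    rcases ha with h | h <;> rcases hb with h' | h' <;> rcases hc with h'' | h'' <;>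
      simp [h, h', h'']
  have hpm2 : ∀ᵐ ω ∂μ, A₂ ω * B₂ ω * C₁ ω = -1 ∨ A₂ ω * B₂ ω * C₁ ω = 1 := by
    filter_upwards [hA₂, hB₂, hC₁] with ω ha hb hc
    rcases ha with h | h <;> rcases hb with h' | h' <;> rcases hc with h'' | h'' <;>
      simp [h, h', h'']
  have e1 := aux_neg_one μ _ ((mA₁.mul mB₁).mul mC₁) hpm1 h1
  have e2 := aux_neg_one μ _ ((mA₂.mul mB₂).mul mC₁) hpm2 h2
  have key : ∀ᵐ ω ∂μ, A₁ ω * A₂ ω * B₁ ω * B₂ ω = 1 := by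
    filter_upwards [e1, e2, hC₁] with ω h h' hc
    rcases hc with hc | hc <;> simp only [Pi.mul_apply] at h h' <;> rw [hc] at h h' <;> nlinarith [h, h']
  rw [integral_congr_ae key]
  simp
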